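/- If F ⊆ 2^{[n]} is an intersecting antichain (intersecting Sperner family), then ∑_{F ∈ F, |F| ≤ n/2} 1/C(n, |F|−1) + ∑_{F ∈ F, |F| > n/2} 1/C(n, |F|) ≤ 1. -/

import Mathlib

open Finset

variable {n : ℕ}

def posInt (a : ZMod n) (k : ℕ) : Finset (ZMod n) :=
  (Finset.range k).image (fun t : ℕ => a + (t : ZMod n))

lemma mem_posInt {a b : ZMod n} {k : ℕ} :
    b ∈ posInt a k ↔ ∃ t, t < k ∧ b = a + (t : ZMod n) := by
  simp [posInt, eq_comm, Finset.mem_image]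

lemma posInt_mono {a : ZMod n} {k k' : ℕ} (h : k ≤ k') : posInt a k ⊆ posInt a k' := by
  intro b hb
  rw [mem_posInt] at hb ⊢
  obtain ⟨t, ht, rfl⟩ := hb
  exact ⟨t, lt_of_lt_of_le ht h, rfl⟩

lemma card_posInt [NeZero n] {a : ZMod n} {k : ℕ} (hk : k ≤ n) : (posInt a k).card = k := by
  rw [posInt, Finset.card_image_of_injOn, Finset.card_range]
  intro t ht s hs hts
  simp only [Finset.coe_range, Set.mem_Iio] at ht hs
  have : ((t : ZMod n)) = (s : ZMod n) := by
    have := hts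
    simpa using this
  have ht' := ZMod.val_cast_of_lt (lt_of_lt_of_le ht hk)
  have hs' := ZMod.val_cast_of_lt (lt_of_lt_of_le hs hk)
  rw [← ht', ← hs', this]

lemma posInt_start_eq {a b : ZMod n} {k : ℕ} (hb : b ∈ posInt a k)
    (hb' : b - 1 ∉ posInt a k) : b = a := by
  rw [mem_posInt] at hb
  obtain ⟨t, ht, rfl⟩ := hb
  rcases Nat.eq_zero_or_pos t with rfl | htpos
  · simp
  · exfalso
    apply hb'
    rw [mem_posInt]
    refine ⟨t - 1, by omega, ?_⟩
    have : ((t - 1 : ℕ) : ZMod n) = (t : ZMod n) - 1 := by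
      push_cast [Nat.cast_sub htpos]
      ring
    rw [this]; ring

lemma posInt_end_eq {a b : ZMod n} {k : ℕ} (hb : b ∈ posInt a k)
    (hb' : b + 1 ∉ posInt a k) : b = a + ((k - 1 : ℕ) : ZMod n) := by
  rw [mem_posInt] at hb
  obtain ⟨t, ht, rfl⟩ := hb
  rcases eq_or_lt_of_le (Nat.lt_iff_add_one_le.mp ht) with heq | hlt
  · have : t = k - 1 := by omega
    rw [this]
  · exfalso
    apply hb'
    rw [mem_posInt]
    exact ⟨t + 1, by omega, by push_cast; ring⟩

lemma mem_posInt_end {a b : ZMod n} {k : ℕ} (hk : 1 ≤ k) :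
    b ∈ posInt a k ↔ ∃ s, s ≤ k - 1 ∧ b = a + ((k - 1 : ℕ) : ZMod n) - (s : ZMod n) := by
  rw [mem_posInt]
  constructor
  · rintro ⟨t, ht, rfl⟩
    refine ⟨k - 1 - t, by omega, ?_⟩
    have h1 : ((k - 1 - t : ℕ) : ZMod n) = ((k-1:ℕ) : ZMod n) - (t : ZMod n) := by
      rw [Nat.cast_sub (by omega)]
    rw [h1]; ring
  · rintro ⟨s, hs, rfl⟩
    refine ⟨k - 1 - s, by omega, ?_⟩
    have h1 : ((k - 1 - s : ℕ) : ZMod n) = ((k-1:ℕ) : ZMod n) - (s : ZMod n) := by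
      rw [Nat.cast_sub (by omega)]
    rw [h1]; ring
lemma posInt_end_mono {a a' : ZMod n} {k k' : ℕ} (hk : 1 ≤ k) (hkk' : k ≤ k')
    (hend : a + ((k - 1 : ℕ) : ZMod n) = a' + ((k' - 1 : ℕ) : ZMod n)) :
    posInt a k ⊆ posInt a' k' := by
  intro b hb
  rw [mem_posInt_end hk] at hb
  rw [mem_posInt_end (le_trans hk hkk')]
  obtain ⟨s, hs, rfl⟩ := hb
  exact ⟨s, by omega, by rw [hend]⟩

lemma posInt_disjoint [NeZero n] {b a : ZMod n} {p q : ℕ} (hp : 1 ≤ p) (hq : 1 ≤ q)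
    (hend : a + ((q - 1 : ℕ) : ZMod n) = b - 1) (hpq : p + q ≤ n) :
    Disjoint (posInt b p) (posInt a q) := by
  rw [Finset.disjoint_left]
  intro c hc hc'
  rw [mem_posInt] at hc
  rw [mem_posInt_end hq, hend] at hc'
  obtain ⟨t, ht, rfl⟩ := hc
  obtain ⟨s, hs, heq⟩ := hc'
  have h0 : ((t + s + 1 : ℕ) : ZMod n) = 0 := by
    push_cast
    linear_combination heq
  rw [ZMod.natCast_eq_zero_iff] at h0
  have := Nat.le_of_dvd (by omega) h0
  omega
lemma ivt_flip (P : ℕ → Prop) {k j₀ j₁ : ℕ} (h₀ : j₀ < k) (h₁ : j₁ < k) (hp : P j₀) (hq : ¬ P j₁) :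
    ∃ i, 1 ≤ i ∧ i < k ∧ ¬ (P i ↔ P (i-1)) := by
  by_contra h
  push_neg at h
  have key : ∀ j, j < k → (P j ↔ P 0) := by
    intro j
    induction j with
    | zero => intro _; rfl
    | succ m ih =>
      intro hjk
      have hm := ih (by omega)
      have h2 := h (m+1) (by omega) (by omega)
      simp only [Nat.add_sub_cancel] at h2
      rw [h2, hm]
  have k0 := (key j₀ h₀).mp hp
  exact hq ((key j₁ h₁).mpr k0)

noncomputable def w (n k : ℕ) : ℝ := if 2 * k ≤ n then ((n:ℝ) - k + 1)/((n:ℝ) * k) else 1 / n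

lemma w_nonneg (n k : ℕ) (hk : k ≤ n) : 0 ≤ w n k := by
  unfold w
  split
  · apply div_nonneg
    · have : (k:ℝ) ≤ n := Nat.cast_le.mpr hk
      linarith
    · positivity
  · positivity
set_option maxHeartbeats 1000000 in
set_option maxRecDepth 10000 in
lemma cycle_lemma [NeZero n] (G : Finset (Finset (ZMod n)))
    (harc : ∀ T ∈ G, ∃ a, T = posInt a T.card)
    (hc1 : ∀ T ∈ G, 1 ≤ T.card) (hc2 : ∀ T ∈ G, T.card ≤ n - 1)
    (hint : ∀ A ∈ G, ∀ B ∈ G, (A ∩ B).Nonempty)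
    (hsp : ∀ A ∈ G, ∀ B ∈ G, A ⊆ B → A = B) :
    ∑ T ∈ G, w n T.card ≤ 1 := by
  classical
  have hn1 : 1 ≤ n := Nat.one_le_iff_ne_zero.mpr (NeZero.ne n)
  have hnR : (1:ℝ) ≤ n := by exact_mod_cast hn1
  -- canonical start point
  let f : Finset (ZMod n) → ZMod n := fun T => if h : ∃ a, T = posInt a T.card then h.choose else 0
  have hf : ∀ T ∈ G, T = posInt (f T) T.card := by
    intro T hT
    simp only [f]
    rw [dif_pos (harc T hT)]
    exact (harc T hT).choose_spec
  by_cases hGs : (G.filter (fun T => 2 * T.card ≤ n)).Nonempty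
  swap
  · -- all members large
    have hlarge : ∀ T ∈ G, ¬ (2 * T.card ≤ n) := by
      intro T hT hle
      exact hGs ⟨T, Finset.mem_filter.mpr ⟨hT, hle⟩⟩
    have hcard : G.card ≤ n := by
      have hinj : Set.InjOn f G := by
        intro T hT T' hT' hff
        rcases le_total T.card T'.card with hle | hle
        · exact hsp T hT T' hT' (by rw [hf T hT, hf T' hT', hff]; exact posInt_mono hle)
        · exact (hsp T' hT' T hT (by rw [hf T hT, hf T' hT', hff]; exact posInt_mono hle)).symm
      calc G.card ≤ (Finset.univ : Finset (ZMod n)).card :=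
            Finset.card_le_card_of_injOn f (fun _ _ => Finset.mem_univ _) hinj
        _ = n := by rw [Finset.card_univ, ZMod.card]
    calc ∑ T ∈ G, w n T.card = ∑ T ∈ G, 1/(n:ℝ) := by
          refine Finset.sum_congr rfl (fun T hT => ?_)
          rw [w, if_neg (hlarge T hT)]
      _ = G.card * (1/(n:ℝ)) := by rw [Finset.sum_const, nsmul_eq_mul]
      _ ≤ n * (1/(n:ℝ)) := by
          apply mul_le_mul_of_nonneg_right _ (by positivity)
          exact_mod_cast hcard
      _ = 1 := by field_simp
  · -- there is a small member; pick a minimal one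
    obtain ⟨A₁, hA₁Gs, hmin'⟩ := Finset.exists_min_image _ Finset.card hGs
    have hA₁G : A₁ ∈ G := (Finset.mem_filter.mp hA₁Gs).1
    have h2k₁ : 2 * A₁.card ≤ n := (Finset.mem_filter.mp hA₁Gs).2
    set k₁ := A₁.card with hk₁def
    have hk₁1 : 1 ≤ k₁ := hc1 A₁ hA₁G
    have hk₁R : (1:ℝ) ≤ k₁ := by exact_mod_cast hk₁1
    have h2k₁R : 2 * (k₁:ℝ) ≤ n := by exact_mod_cast h2k₁
    have hmin : ∀ T ∈ G, 2 * T.card ≤ n → k₁ ≤ T.card := by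
      intro T hT h2
      exact hmin' T (Finset.mem_filter.mpr ⟨hT, h2⟩)
    obtain ⟨x, hx⟩ := harc A₁ hA₁G
    -- start / end predicates at boundary i
    let St : Finset (ZMod n) → ℕ → Prop := fun T i =>
      (x + (i:ZMod n)) ∈ T ∧ (x + (i:ZMod n)) - 1 ∉ T
    let En : Finset (ZMod n) → ℕ → Prop := fun T i =>
      (x + (i:ZMod n)) - 1 ∈ T ∧ (x + (i:ZMod n)) ∉ T
    -- each member other than A₁ crosses some internal boundary
    have hcross : ∀ T ∈ G.erase A₁, ∃ i, (1 ≤ i ∧ i < k₁) ∧ (St T i ∨ En T i) := by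
      intro T hT
      have hTG : T ∈ G := Finset.mem_of_mem_erase hT
      have hTne : T ≠ A₁ := Finset.ne_of_mem_erase hT
      obtain ⟨y, hy⟩ := hint A₁ hA₁G T hTG
      rw [Finset.mem_inter] at hy
      have hy1 : y ∈ posInt x k₁ := by rw [← hx]; exact hy.1
      rw [mem_posInt] at hy1
      obtain ⟨j₀, hj₀, hyj⟩ := hy1
      have hP0 : (x + (j₀:ZMod n)) ∈ T := by rw [← hyj]; exact hy.2
      have hnotall : ∃ j₁, j₁ < k₁ ∧ (x + (j₁:ZMod n)) ∉ T := by
        by_contra hall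
        push_neg at hall
        have hsub : A₁ ⊆ T := by
          intro b hb
          have : b ∈ posInt x k₁ := by rw [← hx]; exact hb
          rw [mem_posInt] at this
          obtain ⟨t, ht, rfl⟩ := this
          exact hall t ht
        exact hTne ((hsp A₁ hA₁G T hTG hsub).symm)
      obtain ⟨j₁, hj₁, hPn⟩ := hnotall
      obtain ⟨i, hi1, hik, hflip⟩ := ivt_flip (fun j => (x + (j:ZMod n)) ∈ T) hj₀ hj₁ hP0 hPn
      have hcast : ((i - 1 : ℕ) : ZMod n) = (i : ZMod n) - 1 := by
        rw [Nat.cast_sub hi1]; simp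
      have hxi : x + ((i-1:ℕ):ZMod n) = x + (i:ZMod n) - 1 := by rw [hcast]; ring
      refine ⟨i, ⟨hi1, hik⟩, ?_⟩
      by_cases hPi : (x + (i:ZMod n)) ∈ T
      · left
        refine ⟨hPi, fun hmem => hflip ?_⟩
        have hmem' : x + ((i-1:ℕ):ZMod n) ∈ T := by rw [hxi]; exact hmem
        exact iff_of_true hPi hmem'
      · right
        have hP1 : x + ((i-1:ℕ):ZMod n) ∈ T := by tauto
        exact ⟨by rw [← hxi]; exact hP1, hPi⟩
    -- assignment function
    let φ : Finset (ZMod n) → ℕ := fun T =>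
      if h : ∃ i, (1 ≤ i ∧ i < k₁) ∧ (St T i ∨ En T i) then h.choose else 0
    have hφ : ∀ T ∈ G.erase A₁, (1 ≤ φ T ∧ φ T < k₁) ∧ (St T (φ T) ∨ En T (φ T)) := by
      intro T hT
      simp only [φ]
      rw [dif_pos (hcross T hT)]
      exact (hcross T hT).choose_spec
    -- key structural facts
    have hStart_rep : ∀ T ∈ G, ∀ i : ℕ, St T i → T = posInt (x + (i:ZMod n)) T.card := by
      intro T hT i hSt
      have hrep := hf T hT
      have : x + (i:ZMod n) = f T :=
        posInt_start_eq (by rw [← hrep]; exact hSt.1) (by rw [← hrep]; exact hSt.2)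
      rw [this]; exact hrep
    have hEnd_rep : ∀ T ∈ G, ∀ i : ℕ, En T i →
        f T + ((T.card - 1 : ℕ) : ZMod n) = (x + (i:ZMod n)) - 1 := by
      intro T hT i hEn
      have hrep := hf T hT
      have h1 : (x + (i:ZMod n)) - 1 ∈ posInt (f T) T.card := by rw [← hrep]; exact hEn.1
      have h2 : (x + (i:ZMod n)) - 1 + 1 ∉ posInt (f T) T.card := by
        have he : x + (i:ZMod n) - 1 + 1 = x + (i:ZMod n) := by ring
        rw [he, ← hrep]; exact hEn.2
      exact (posInt_end_eq h1 h2).symm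
    have hStart_unique : ∀ i : ℕ, ∀ T ∈ G, ∀ T' ∈ G, St T i → St T' i → T = T' := by
      intro i T hT T' hT' h1 h2
      have e1 := hStart_rep T hT i h1
      have e2 := hStart_rep T' hT' i h2
      rcases le_total T.card T'.card with hle | hle
      · exact hsp T hT T' hT' (by rw [e1, e2]; exact posInt_mono hle)
      · exact (hsp T' hT' T hT (by rw [e1, e2]; exact posInt_mono hle)).symm
    have hEnd_unique : ∀ i : ℕ, ∀ T ∈ G, ∀ T' ∈ G, En T i → En T' i → T = T' := by
      intro i T hT T' hT' h1 h2
      have e1 := hEnd_rep T hT i h1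
      have e2 := hEnd_rep T' hT' i h2
      rcases le_total T.card T'.card with hle | hle
      · refine hsp T hT T' hT' ?_
        rw [hf T hT, hf T' hT']
        exact posInt_end_mono (hc1 T hT) hle (by rw [e1, e2])
      · refine (hsp T' hT' T hT ?_).symm
        rw [hf T' hT', hf T hT]
        exact posInt_end_mono (hc1 T' hT') hle (by rw [e1, e2])
    have hSmallPair : ∀ i : ℕ, ∀ S ∈ G, ∀ T ∈ G, St S i → En T i →
        2 * S.card ≤ n → 2 * T.card ≤ n → False := by
      intro i S hS T hT hSt hEn h2S h2T
      have eS := hStart_rep S hS i hSt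
      have eT := hf T hT
      have hend := hEnd_rep T hT i hEn
      have hdisj : Disjoint S T := by
        rw [eS, eT]
        exact posInt_disjoint (hc1 S hS) (hc1 T hT) hend (by omega)
      obtain ⟨y, hy⟩ := hint S hS T hT
      rw [Finset.mem_inter] at hy
      exact (Finset.disjoint_left.mp hdisj hy.1) hy.2
    have hbound_pos : (0:ℝ) < (n:ℝ) * k₁ := mul_pos (by linarith) (by linarith)
    have hsingle : ∀ T ∈ G, w n T.card ≤ ((n:ℝ)+1)/((n:ℝ)*k₁) := by
      intro T hT
      have hkR : (1:ℝ) ≤ T.card := by exact_mod_cast hc1 T hT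
      have hknR : (T.card:ℝ) ≤ n := by exact_mod_cast le_trans (hc2 T hT) (by omega)
      rw [w]
      split
      · rename_i hsm
        have hk₁k : (k₁:ℝ) ≤ T.card := by exact_mod_cast hmin T hT hsm
        exact div_le_div₀ (by linarith) (by linarith) hbound_pos (by nlinarith)
      · rw [div_le_div_iff₀ (by positivity) hbound_pos]
        nlinarith
    have hpair : ∀ i : ℕ, ∀ S ∈ G, ∀ T ∈ G, St S i → En T i →
        w n S.card + w n T.card ≤ ((n:ℝ)+1)/((n:ℝ)*k₁) := by
      intro i S hS T hT hSt hEn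
      have hkS1 : (1:ℝ) ≤ S.card := by exact_mod_cast hc1 S hS
      have hkT1 : (1:ℝ) ≤ T.card := by exact_mod_cast hc1 T hT
      have hkSn : (S.card:ℝ) ≤ n := by exact_mod_cast le_trans (hc2 S hS) (by omega)
      have hkTn : (T.card:ℝ) ≤ n := by exact_mod_cast le_trans (hc2 T hT) (by omega)
      by_cases h2S : 2 * S.card ≤ n <;> by_cases h2T : 2 * T.card ≤ n
      · exact (hSmallPair i S hS T hT hSt hEn h2S h2T).elim
      · have hk₁S : (k₁:ℝ) ≤ S.card := by exact_mod_cast hmin S hS h2S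
        rw [w, w, if_pos h2S, if_neg h2T,
          div_add_div _ _ (mul_pos (by linarith : (0:ℝ) < n) (by linarith : (0:ℝ) < (S.card:ℝ))).ne' (by positivity),
          div_le_div_iff₀ (mul_pos (mul_pos (by linarith : (0:ℝ) < n) (by linarith : (0:ℝ) < (S.card:ℝ))) (by linarith : (0:ℝ) < n)) hbound_pos]
        nlinarith [mul_nonneg (mul_nonneg (mul_nonneg (sub_nonneg.mpr hk₁S)
          (by linarith : (0:ℝ) ≤ (n:ℝ)+1)) (by linarith : (0:ℝ) ≤ (n:ℝ)))
          (by linarith : (0:ℝ) ≤ (n:ℝ))]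
      · have hk₁T : (k₁:ℝ) ≤ T.card := by exact_mod_cast hmin T hT h2T
        rw [w, w, if_neg h2S, if_pos h2T,
          div_add_div _ _ (by positivity) (mul_pos (by linarith : (0:ℝ) < n) (by linarith : (0:ℝ) < (T.card:ℝ))).ne',
          div_le_div_iff₀ (mul_pos (by linarith : (0:ℝ) < n) (mul_pos (by linarith : (0:ℝ) < n) (by linarith : (0:ℝ) < (T.card:ℝ)))) hbound_pos]
        nlinarith [mul_nonneg (mul_nonneg (mul_nonneg (sub_nonneg.mpr hk₁T)
          (by linarith : (0:ℝ) ≤ (n:ℝ)+1)) (by linarith : (0:ℝ) ≤ (n:ℝ)))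
          (by linarith : (0:ℝ) ≤ (n:ℝ))]
      · rw [w, w, if_neg h2S, if_neg h2T,
          div_add_div _ _ (by positivity) (by positivity),
          div_le_div_iff₀ (by positivity) hbound_pos]
        nlinarith [mul_nonneg (mul_nonneg (by linarith : (0:ℝ) ≤ (n:ℝ))
          (by linarith : (0:ℝ) ≤ (n:ℝ))) (by linarith : (0:ℝ) ≤ (n:ℝ)+1-2*(k₁:ℝ))]
    have hfiberbound : ∀ i ∈ Finset.Ico 1 k₁,
        ∑ T ∈ (G.erase A₁).filter (fun T => φ T = i), w n T.card ≤ ((n:ℝ)+1)/((n:ℝ)*k₁) := by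
      intro i _
      set B := (G.erase A₁).filter (fun T => φ T = i) with hB
      have hBcross : ∀ T ∈ B, T ∈ G ∧ (St T i ∨ En T i) := by
        intro T hT
        rw [hB, Finset.mem_filter] at hT
        obtain ⟨hT1, hT2⟩ := hT
        have h := hφ T hT1
        rw [hT2] at h
        exact ⟨Finset.mem_of_mem_erase hT1, h.2⟩
      set Bs := B.filter (fun T => St T i) with hBsdef
      set Be := B.filter (fun T => En T i) with hBedef
      have hBsG : ∀ T ∈ Bs, T ∈ G ∧ St T i := fun T hT =>
        ⟨(hBcross T (Finset.mem_filter.mp hT).1).1, (Finset.mem_filter.mp hT).2⟩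
      have hBeG : ∀ T ∈ Be, T ∈ G ∧ En T i := fun T hT =>
        ⟨(hBcross T (Finset.mem_filter.mp hT).1).1, (Finset.mem_filter.mp hT).2⟩
      have hsub : B ⊆ Bs ∪ Be := by
        intro T hT
        rcases (hBcross T hT).2 with h | h
        · exact Finset.mem_union_left _ (Finset.mem_filter.mpr ⟨hT, h⟩)
        · exact Finset.mem_union_right _ (Finset.mem_filter.mpr ⟨hT, h⟩)
      have hwnn : ∀ T ∈ G, 0 ≤ w n T.card := fun T hT =>
        w_nonneg n T.card (le_trans (hc2 T hT) (by omega))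
      have hstep : ∑ T ∈ B, w n T.card ≤ ∑ T ∈ Bs, w n T.card + ∑ T ∈ Be, w n T.card := by
        have h1 : ∑ T ∈ B, w n T.card ≤ ∑ T ∈ Bs ∪ Be, w n T.card := by
          apply Finset.sum_le_sum_of_subset_of_nonneg hsub
          intro T hT _
          rcases Finset.mem_union.mp hT with h | h
          · exact hwnn T (hBsG T h).1
          · exact hwnn T (hBeG T h).1
        have h2 := Finset.sum_union_inter (s₁ := Bs) (s₂ := Be) (f := fun T => w n T.card)
        have h3 : 0 ≤ ∑ T ∈ Bs ∩ Be, w n T.card := by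
          apply Finset.sum_nonneg
          intro T hT
          exact hwnn T (hBsG T (Finset.mem_inter.mp hT).1).1
        linarith
      rcases Finset.eq_empty_or_nonempty Bs with hBse | hBsne
      · rcases Finset.eq_empty_or_nonempty Be with hBee | hBene
        · rw [hBse, hBee] at hstep
          simp only [Finset.sum_empty, add_zero] at hstep
          exact le_trans hstep (div_nonneg (by linarith) hbound_pos.le)
        · obtain ⟨T₂, hT₂⟩ := hBene
          have hBeT : Be = {T₂} := Finset.eq_singleton_iff_unique_mem.mpr
            ⟨hT₂, fun T' hT' => hEnd_unique i T' (hBeG T' hT').1 T₂ (hBeG T₂ hT₂).1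
              (hBeG T' hT').2 (hBeG T₂ hT₂).2⟩
          rw [hBse, hBeT] at hstep
          simp only [Finset.sum_empty, Finset.sum_singleton, zero_add] at hstep
          exact le_trans hstep (hsingle T₂ (hBeG T₂ hT₂).1)
      · obtain ⟨S, hS⟩ := hBsne
        have hBsS : Bs = {S} := Finset.eq_singleton_iff_unique_mem.mpr
          ⟨hS, fun T' hT' => hStart_unique i T' (hBsG T' hT').1 S (hBsG S hS).1
            (hBsG T' hT').2 (hBsG S hS).2⟩
        rcases Finset.eq_empty_or_nonempty Be with hBee | hBene
        · rw [hBsS, hBee] at hstep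
          simp only [Finset.sum_empty, Finset.sum_singleton, add_zero] at hstep
          exact le_trans hstep (hsingle S (hBsG S hS).1)
        · obtain ⟨T₂, hT₂⟩ := hBene
          have hBeT : Be = {T₂} := Finset.eq_singleton_iff_unique_mem.mpr
            ⟨hT₂, fun T' hT' => hEnd_unique i T' (hBeG T' hT').1 T₂ (hBeG T₂ hT₂).1
              (hBeG T' hT').2 (hBeG T₂ hT₂).2⟩
          rw [hBsS, hBeT] at hstep
          simp only [Finset.sum_singleton] at hstep
          exact le_trans hstep (hpair i S (hBsG S hS).1 T₂ (hBeG T₂ hT₂).1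
            (hBsG S hS).2 (hBeG T₂ hT₂).2)
    have hmaps : ∀ T ∈ G.erase A₁, φ T ∈ Finset.Ico 1 k₁ := by
      intro T hT
      rw [Finset.mem_Ico]
      exact ⟨(hφ T hT).1.1, (hφ T hT).1.2⟩
    have hsplit : ∑ T ∈ G, w n T.card = w n k₁ + ∑ T ∈ G.erase A₁, w n T.card :=
      (Finset.add_sum_erase G _ hA₁G).symm
    have hfib := Finset.sum_fiberwise_of_maps_to hmaps (fun T => w n T.card)
    have herase : ∑ T ∈ G.erase A₁, w n T.card
        ≤ ((k₁ - 1 : ℕ):ℝ) * (((n:ℝ)+1)/((n:ℝ)*k₁)) := by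
      rw [← hfib]
      calc ∑ i ∈ Finset.Ico 1 k₁, ∑ T ∈ (G.erase A₁).filter (fun T => φ T = i), w n T.card
          ≤ ∑ _i ∈ Finset.Ico 1 k₁, ((n:ℝ)+1)/((n:ℝ)*k₁) := Finset.sum_le_sum hfiberbound
        _ = ((k₁ - 1 : ℕ):ℝ) * (((n:ℝ)+1)/((n:ℝ)*k₁)) := by
            rw [Finset.sum_const, Nat.card_Ico, nsmul_eq_mul]
    have hw1 : w n k₁ = ((n:ℝ) - k₁ + 1)/((n:ℝ)*k₁) := by rw [w, if_pos h2k₁]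
    have hfinal : ((n:ℝ) - k₁ + 1)/((n:ℝ)*k₁)
        + ((k₁ - 1 : ℕ):ℝ) * (((n:ℝ)+1)/((n:ℝ)*k₁)) = 1 := by
      have hcc : ((k₁ - 1 : ℕ):ℝ) = (k₁:ℝ) - 1 := by
        rw [Nat.cast_sub hk₁1, Nat.cast_one]
      rw [hcc]
      have h0 : ((n:ℝ)*k₁) ≠ 0 := ne_of_gt hbound_pos
      field_simp
      ring
    rw [hsplit, hw1]
    linarith
section build
variable [NeZero n] {S : Finset (Fin n)} {k : ℕ}

lemma zmod_cast_val (z : ZMod n) : ((z.val : ℕ) : ZMod n) = z := by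
  rw [ZMod.natCast_val, ZMod.cast_id]

def build (S : Finset (Fin n)) (k : ℕ) (a : ZMod n) (f : Fin k ≃ {y // y ∈ S})
    (g : Fin (n - k) ≃ {y // y ∈ (Sᶜ : Finset (Fin n))}) : ZMod n → Fin n :=
  fun z => if h : (z - a).val < k then (f ⟨(z - a).val, h⟩ : Fin n)
    else (g ⟨(z - a).val - k, by have := ZMod.val_lt (z - a); omega⟩ : Fin n)

variable {a : ZMod n} {f : Fin k ≃ {y // y ∈ S}} {g : Fin (n - k) ≃ {y // y ∈ (Sᶜ : Finset (Fin n))}}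

lemma build_mem (z : ZMod n) : build S k a f g z ∈ S ↔ (z - a).val < k := by
  unfold build
  split
  · rename_i h
    simp only [h, iff_true]
    exact (f _).2
  · rename_i h
    simp only [h, iff_false]
    have := (g ⟨(z - a).val - k, by have := ZMod.val_lt (z - a); omega⟩).2
    rw [Finset.mem_compl] at this
    exact this

lemma build_inj : Function.Injective (build S k a f g) := by
  intro z₁ z₂ hz
  unfold build at hz
  split at hz <;> split at hz
  · rename_i h1 h2
    have : z₁ - a = z₂ - a := by
      have hv : (z₁ - a).val = (z₂ - a).val := by
        have := f.injective (Subtype.ext hz)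
        simpa using congrArg Fin.val this
      rw [← zmod_cast_val (z₁ - a), ← zmod_cast_val (z₂ - a), hv]
    exact sub_left_injective this
  · rename_i h1 h2
    exfalso
    have m1 := (f ⟨(z₁ - a).val, h1⟩).2
    have m2 := Finset.mem_compl.mp
      (g ⟨(z₂ - a).val - k, by have := ZMod.val_lt (z₂ - a); omega⟩).2
    exact m2 (hz ▸ m1)
  · rename_i h1 h2
    exfalso
    have m1 := (f ⟨(z₂ - a).val, h2⟩).2
    have m2 := Finset.mem_compl.mp
      (g ⟨(z₁ - a).val - k, by have := ZMod.val_lt (z₁ - a); omega⟩).2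
    exact m2 (hz ▸ m1)
  · rename_i h1 h2
    have hv : (z₁ - a).val - k = (z₂ - a).val - k := by
      have := g.injective (Subtype.ext hz)
      simpa using congrArg Fin.val this
    have : z₁ - a = z₂ - a := by
      rw [← zmod_cast_val (z₁ - a), ← zmod_cast_val (z₂ - a)]
      congr 1
      omega
    exact sub_left_injective this

lemma build_bij : Function.Bijective (build S k a f g) :=
  (Fintype.bijective_iff_injective_and_card _).mpr
    ⟨build_inj, by rw [ZMod.card, Fintype.card_fin]⟩

lemma build_eval_lt {t : ℕ} (ht : t < k) (hkn : k ≤ n) :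
    build S k a f g (a + (t : ZMod n)) = (f ⟨t, ht⟩ : Fin n) := by
  have hval : (a + (t : ZMod n) - a).val = t := by
    rw [add_sub_cancel_left]
    exact ZMod.val_cast_of_lt (by omega)
  unfold build
  split
  · rename_i h
    have hmk : (⟨(a + (t : ZMod n) - a).val, h⟩ : Fin k) = ⟨t, ht⟩ := by
      refine Fin.ext ?_
      show (a + (t : ZMod n) - a).val = t
      exact hval
    exact congrArg (fun w => (f w : Fin n)) hmk
  · rename_i h
    rw [hval] at h
    exact absurd ht h

lemma build_eval_ge {u : ℕ} (hu : u < n - k) :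
    build S k a f g (a + ((k + u : ℕ) : ZMod n)) = (g ⟨u, hu⟩ : Fin n) := by
  have hval : (a + ((k + u : ℕ) : ZMod n) - a).val = k + u := by
    rw [add_sub_cancel_left]
    exact ZMod.val_cast_of_lt (by omega)
  unfold build
  split
  · rename_i h
    rw [hval] at h
    omega
  · rename_i h
    have hmk : (⟨(a + ((k + u : ℕ) : ZMod n) - a).val - k,
        by have := ZMod.val_lt (a + ((k + u : ℕ) : ZMod n) - a); omega⟩ : Fin (n - k)) = ⟨u, hu⟩ := by
      refine Fin.ext ?_
      show (a + ((k + u : ℕ) : ZMod n) - a).val - k = u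
      rw [hval]
      omega
    exact congrArg (fun w => (g w : Fin n)) hmk

lemma build_start (hk1 : 1 ≤ k) (hk2 : k ≤ n - 1) {z : ZMod n}
    (h1 : build S k a f g z ∈ S) (h2 : build S k a f g (z - 1) ∉ S) : z = a := by
  have hn1 : 1 ≤ n := Nat.one_le_iff_ne_zero.mpr (NeZero.ne n)
  rw [build_mem] at h1 h2
  set v := (z - a).val with hv
  by_cases hv0 : v = 0
  · have : z - a = 0 := by rw [← zmod_cast_val (z - a), ← hv, hv0, Nat.cast_zero]
    exact sub_eq_zero.mp this
  · exfalso
    apply h2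
    have hzv : z - a = ((v : ℕ) : ZMod n) := (zmod_cast_val (z - a)).symm
    have : z - 1 - a = ((v - 1 : ℕ) : ZMod n) := by
      rw [Nat.cast_sub (by omega), ← hzv, Nat.cast_one]
      ring
    rw [this, ZMod.val_cast_of_lt (by have := ZMod.val_lt (z - a); omega)]
    omega

end build
lemma build_arc [NeZero n] {S : Finset (Fin n)} {k : ℕ} {a : ZMod n}
    {f : Fin k ≃ {y // y ∈ S}} {g : Fin (n - k) ≃ {y // y ∈ (Sᶜ : Finset (Fin n))}}
    (hkS : S.card = k) (hkn : k ≤ n) :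
    S = (posInt a k).image (Equiv.ofBijective _ (build_bij (S := S) (k := k) (a := a) (f := f) (g := g))) := by
  have hsub : (posInt a k).image (Equiv.ofBijective _ (build_bij (S := S) (k := k) (a := a) (f := f) (g := g))) ⊆ S := by
    intro y hy
    rw [Finset.mem_image] at hy
    obtain ⟨b, hb, rfl⟩ := hy
    rw [mem_posInt] at hb
    obtain ⟨t, ht, rfl⟩ := hb
    rw [Equiv.ofBijective_apply, build_eval_lt ht hkn]
    exact (f ⟨t, ht⟩).2
  refine (Finset.eq_of_subset_of_card_le hsub ?_).symm
  rw [Finset.card_image_of_injective _ (Equiv.injective _), card_posInt hkn, hkS]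

set_option maxHeartbeats 1000000 in
lemma count_ge [NeZero n] (S : Finset (Fin n)) (hk1 : 1 ≤ S.card) (hk2 : S.card ≤ n - 1) :
    n * (Nat.factorial S.card * Nat.factorial (n - S.card))
      ≤ Fintype.card {σ : ZMod n ≃ Fin n // ∃ a, S = (posInt a S.card).image σ} := by
  classical
  set k := S.card with hkdef
  have hn1 : 1 ≤ n := Nat.one_le_iff_ne_zero.mpr (NeZero.ne n)
  have hkn : k ≤ n := by omega
  have hSc : Fintype.card {y // y ∈ S} = k := by simp [Fintype.card_coe, hkdef]
  have hScc : Fintype.card {y // y ∈ (Sᶜ : Finset (Fin n))} = n - k := by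
    simp [Fintype.card_coe, Finset.card_compl, hkdef]
  let Φ : ZMod n × (Fin k ≃ {y // y ∈ S}) × (Fin (n - k) ≃ {y // y ∈ (Sᶜ : Finset (Fin n))}) →
      {σ : ZMod n ≃ Fin n // ∃ a, S = (posInt a S.card).image σ} :=
    fun p => ⟨Equiv.ofBijective _ (build_bij (S := S) (k := k) (a := p.1) (f := p.2.1) (g := p.2.2)),
      ⟨p.1, build_arc rfl hkn⟩⟩
  have hΦinj : Function.Injective Φ := by
    rintro ⟨a, f, g⟩ ⟨a', f', g'⟩ hEq
    simp only [Φ, Subtype.mk.injEq] at hEq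
    have hfun : ∀ z, build S k a f g z = build S k a' f' g' z := by
      intro z
      have := DFunLike.congr_fun hEq z
      simpa using this
    have ha : a = a' := by
      apply build_start (S := S) (k := k) (a := a') (f := f') (g := g') hk1 hk2
      · rw [← hfun a, build_mem, sub_self, ZMod.val_zero]
        omega
      · rw [← hfun (a - 1), build_mem]
        have he : a - 1 - a = ((n - 1 : ℕ) : ZMod n) := by
          rw [Nat.cast_sub hn1, ZMod.natCast_self, Nat.cast_one]
          ring
        rw [he, ZMod.val_cast_of_lt (by omega)]
        omega
    have hfeq : f = f' := by
      apply Equiv.ext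
      intro t
      apply Subtype.ext
      have h1 := build_eval_lt (S := S) (a := a) (f := f) (g := g) t.2 hkn
      have h2 := build_eval_lt (S := S) (a := a') (f := f') (g := g') t.2 hkn
      have : (f ⟨t.1, t.2⟩ : Fin n) = (f' ⟨t.1, t.2⟩ : Fin n) := by
        rw [← h1, ← h2, hfun, ha]
      exact this
    have hgeq : g = g' := by
      apply Equiv.ext
      intro u
      apply Subtype.ext
      have h1 := build_eval_ge (S := S) (a := a) (f := f) (g := g) u.2
      have h2 := build_eval_ge (S := S) (a := a') (f := f') (g := g') u.2
      have : (g ⟨u.1, u.2⟩ : Fin n) = (g' ⟨u.1, u.2⟩ : Fin n) := by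
        rw [← h1, ← h2, hfun, ha]
      exact this
    subst ha; subst hfeq; subst hgeq; rfl
  calc n * (Nat.factorial k * Nat.factorial (n - k))
      = Fintype.card (ZMod n × (Fin k ≃ {y // y ∈ S}) × (Fin (n - k) ≃ {y // y ∈ (Sᶜ : Finset (Fin n))})) := by
        rw [Fintype.card_prod, Fintype.card_prod, ZMod.card,
          Fintype.card_equiv (Fintype.equivOfCardEq (by rw [Fintype.card_fin, hSc])),
          Fintype.card_equiv (Fintype.equivOfCardEq (by rw [Fintype.card_fin, hScc])),
          Fintype.card_fin, Fintype.card_fin]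
    _ ≤ _ := Fintype.card_le_of_injective Φ hΦinj
set_option maxHeartbeats 1000000 in
theorem stmt_15 (n : ℕ) (F : Finset (Finset (Fin n)))
    (hint : ∀ A ∈ F, ∀ B ∈ F, (A ∩ B).Nonempty)
    (hsperner : ∀ A ∈ F, ∀ B ∈ F, A ⊆ B → A = B) :
    (∑ S ∈ F.filter (fun S => 2 * S.card ≤ n), (1 : ℝ) / (n.choose (S.card - 1)))
    + (∑ S ∈ F.filter (fun S => 2 * S.card > n), (1 : ℝ) / (n.choose S.card)) ≤ 1 := by
  classical
  have hcomb : (∑ S ∈ F.filter (fun S => 2 * S.card ≤ n), (1 : ℝ) / (n.choose (S.card - 1)))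
      + (∑ S ∈ F.filter (fun S => 2 * S.card > n), (1 : ℝ) / (n.choose S.card))
      = ∑ S ∈ F, (if 2 * S.card ≤ n then (1 : ℝ) / (n.choose (S.card - 1))
          else (1 : ℝ) / (n.choose S.card)) := by
    rw [← Finset.sum_filter_add_sum_filter_not F (fun S => 2 * S.card ≤ n)]
    congr 1
    · refine Finset.sum_congr rfl (fun S hS => ?_)
      rw [if_pos (Finset.mem_filter.mp hS).2]
    · refine Finset.sum_congr ?_ (fun S hS => ?_)
      · ext S
        simp only [Finset.mem_filter]
        constructor
        · rintro ⟨h1, h2⟩; exact ⟨h1, by omega⟩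
        · rintro ⟨h1, h2⟩; exact ⟨h1, by omega⟩
      · rw [if_neg (Finset.mem_filter.mp hS).2]
  rw [hcomb]
  rcases Nat.eq_zero_or_pos n with hn0 | hnpos
  · subst hn0
    have hFe : F = ∅ := by
      rw [Finset.eq_empty_iff_forall_notMem]
      intro A hA
      obtain ⟨y, _⟩ := hint A hA A hA
      exact Fin.elim0 y
    rw [hFe]
    simp
  · haveI : NeZero n := ⟨by omega⟩
    by_cases huniv : Finset.univ ∈ F
    · have hFeq : F = {Finset.univ} := Finset.eq_singleton_iff_unique_mem.mpr
        ⟨huniv, fun A hA => hsperner A hA _ huniv (Finset.subset_univ A)⟩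
      rw [hFeq, Finset.sum_singleton]
      rw [if_neg (by rw [Finset.card_univ, Fintype.card_fin]; omega)]
      rw [Finset.card_univ, Fintype.card_fin, Nat.choose_self]
      norm_num
    · have hmem : ∀ A ∈ F, 1 ≤ A.card ∧ A.card ≤ n - 1 := by
        intro A hA
        constructor
        · obtain ⟨y, hy⟩ := hint A hA A hA
          exact Finset.card_pos.mpr ⟨y, (Finset.mem_inter.mp hy).1⟩
        · have h1 : A.card ≤ n := by simpa using Finset.card_le_univ A
          have h2 : A ≠ Finset.univ := fun h => huniv (h ▸ hA)
          rcases Nat.lt_or_ge A.card n with h | h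
          · omega
          · exact absurd (Finset.eq_univ_of_card A (by rw [Fintype.card_fin]; omega)) h2
      have hnfac : (0:ℝ) < (Nat.factorial n : ℝ) := by
        exact_mod_cast Nat.factorial_pos n
      -- per-permutation bound via the cycle lemma
      have per_sigma : ∀ σ : ZMod n ≃ Fin n,
          ∑ S ∈ F.filter (fun S => ∃ a, S = (posInt a S.card).image σ), w n S.card ≤ 1 := by
        intro σ
        have hinj : Function.Injective (fun S : Finset (Fin n) => S.image ⇑σ.symm) :=
          Finset.image_injective (Equiv.injective σ.symm)
        have hcardeq : ∀ S : Finset (Fin n), (S.image ⇑σ.symm).card = S.card :=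
          fun S => Finset.card_image_of_injective _ (Equiv.injective σ.symm)
        have hsum : ∑ T ∈ (F.filter (fun S => ∃ a, S = (posInt a S.card).image σ)).image
              (fun S => S.image ⇑σ.symm), w n T.card
            = ∑ S ∈ F.filter (fun S => ∃ a, S = (posInt a S.card).image σ), w n S.card := by
          rw [Finset.sum_image (fun S _ T _ h => hinj h)]
          exact Finset.sum_congr rfl fun S _ => by rw [hcardeq]
        rw [← hsum]
        apply cycle_lemma
        · intro T hT
          rw [Finset.mem_image] at hT
          obtain ⟨S, hSF, rfl⟩ := hT
          obtain ⟨a, ha⟩ := (Finset.mem_filter.mp hSF).2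
          refine ⟨a, ?_⟩
          rw [hcardeq]
          conv_lhs => rw [ha]
          rw [Finset.image_image]
          have : ⇑σ.symm ∘ ⇑σ = id := by
            funext z; simp
          rw [this, Finset.image_id]
        · intro T hT
          rw [Finset.mem_image] at hT
          obtain ⟨S, hSF, rfl⟩ := hT
          rw [hcardeq]
          exact (hmem S (Finset.mem_filter.mp hSF).1).1
        · intro T hT
          rw [Finset.mem_image] at hT
          obtain ⟨S, hSF, rfl⟩ := hT
          rw [hcardeq]
          exact (hmem S (Finset.mem_filter.mp hSF).1).2
        · intro A hA B hB
          rw [Finset.mem_image] at hA hB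
          obtain ⟨S, hSF, rfl⟩ := hA
          obtain ⟨S', hSF', rfl⟩ := hB
          rw [← Finset.image_inter _ _ (Equiv.injective σ.symm)]
          exact (hint S (Finset.mem_filter.mp hSF).1 S' (Finset.mem_filter.mp hSF').1).image _
        · intro A hA B hB hAB
          rw [Finset.mem_image] at hA hB
          obtain ⟨S, hSF, rfl⟩ := hA
          obtain ⟨S', hSF', rfl⟩ := hB
          rw [Finset.image_subset_image_iff (Equiv.injective σ.symm)] at hAB
          rw [hsperner S (Finset.mem_filter.mp hSF).1 S' (Finset.mem_filter.mp hSF').1 hAB]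
      -- the per-term weight identity
      have hident : ∀ S ∈ F, (if 2 * S.card ≤ n then (1 : ℝ) / (n.choose (S.card - 1))
            else (1 : ℝ) / (n.choose S.card)) * (Nat.factorial n : ℝ)
          = w n S.card * ((n:ℝ) * ((Nat.factorial S.card : ℝ) * (Nat.factorial (n - S.card) : ℝ))) := by
        intro S hS
        obtain ⟨hk1, hk2⟩ := hmem S hS
        set k := S.card with hkdef
        by_cases h2 : 2 * k ≤ n
        · rw [if_pos h2, w, if_pos h2]
          have hCpos : 0 < n.choose (k - 1) := Nat.choose_pos (by omega)
          have hC : ((n.choose (k - 1) : ℕ) : ℝ) ≠ 0 := by exact_mod_cast hCpos.ne'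
          have hnk : ((n:ℝ) * k) ≠ 0 := by
            have h1 : (0:ℝ) < n := by exact_mod_cast hnpos
            have h2' : (0:ℝ) < k := by exact_mod_cast hk1
            positivity
          have e1 : ((n:ℝ) - k + 1) = ((n - k + 1 : ℕ) : ℝ) := by
            push_cast [Nat.cast_sub (show k ≤ n by omega)]
            ring
          rw [e1, div_mul_eq_mul_div, div_mul_eq_mul_div, div_eq_div_iff hC hnk, one_mul]
          have hnat : (Nat.factorial n) * (n * k)
              = (n - k + 1) * (n * (Nat.factorial k * Nat.factorial (n - k))) * (n.choose (k - 1)) := by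
            have hcmf := Nat.choose_mul_factorial_mul_factorial (show k - 1 ≤ n by omega)
            have h3 : n - (k - 1) = (n - k) + 1 := by omega
            rw [h3, Nat.factorial_succ] at hcmf
            have h4 : Nat.factorial k = k * Nat.factorial (k - 1) := by
              conv_lhs => rw [show k = (k - 1) + 1 by omega]
              rw [Nat.factorial_succ]
              congr 2
              omega
            rw [← hcmf, h4]
            ring
          exact_mod_cast hnat
        · rw [if_neg h2, w, if_neg h2]
          have hCpos : 0 < n.choose k := Nat.choose_pos (by omega)
          have hC : ((n.choose k : ℕ) : ℝ) ≠ 0 := by exact_mod_cast hCpos.ne'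
          have hn0 : ((n:ℝ)) ≠ 0 := by
            have h1 : (0:ℝ) < n := by exact_mod_cast hnpos
            positivity
          rw [div_mul_eq_mul_div, div_mul_eq_mul_div, div_eq_div_iff hC hn0, one_mul, one_mul]
          have hnat : (Nat.factorial n) * n
              = (n * (Nat.factorial k * Nat.factorial (n - k))) * (n.choose k) := by
            have hcmf := Nat.choose_mul_factorial_mul_factorial (show k ≤ n by omega)
            rw [← hcmf]
            ring
          exact_mod_cast hnat
      -- put everything together
      have key : (∑ S ∈ F, (if 2 * S.card ≤ n then (1 : ℝ) / (n.choose (S.card - 1))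
            else (1 : ℝ) / (n.choose S.card))) * (Nat.factorial n : ℝ) ≤ (Nat.factorial n : ℝ) := by
        rw [Finset.sum_mul]
        calc ∑ S ∈ F, (if 2 * S.card ≤ n then (1 : ℝ) / (n.choose (S.card - 1))
              else (1 : ℝ) / (n.choose S.card)) * (Nat.factorial n : ℝ)
            = ∑ S ∈ F, w n S.card * ((n:ℝ) * ((Nat.factorial S.card : ℝ) * (Nat.factorial (n - S.card) : ℝ))) :=
              Finset.sum_congr rfl hident
          _ ≤ ∑ S ∈ F, w n S.card
                * ((Fintype.card {σ : ZMod n ≃ Fin n // ∃ a, S = (posInt a S.card).image σ} : ℕ) : ℝ) := by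
              apply Finset.sum_le_sum
              intro S hS
              apply mul_le_mul_of_nonneg_left _ (w_nonneg n S.card (by
                have := (hmem S hS).2; omega))
              exact_mod_cast count_ge S (hmem S hS).1 (hmem S hS).2
          _ = ∑ S ∈ F, ∑ σ : ZMod n ≃ Fin n,
                (if ∃ a, S = (posInt a S.card).image σ then w n S.card else 0) := by
              refine Finset.sum_congr rfl (fun S hS => ?_)
              rw [Fintype.card_subtype, Finset.sum_ite, Finset.sum_const, Finset.sum_const_zero,
                add_zero, nsmul_eq_mul, mul_comm]
          _ = ∑ σ : ZMod n ≃ Fin n, ∑ S ∈ F,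
                (if ∃ a, S = (posInt a S.card).image σ then w n S.card else 0) := Finset.sum_comm
          _ ≤ ∑ _σ : ZMod n ≃ Fin n, (1:ℝ) := by
              apply Finset.sum_le_sum
              intro σ _
              rw [← Finset.sum_filter]
              exact per_sigma σ
          _ = ((Fintype.card (ZMod n ≃ Fin n) : ℕ) : ℝ) := by
              rw [Finset.sum_const, Finset.card_univ, nsmul_eq_mul, mul_one]
          _ = (Nat.factorial n : ℝ) := by
              rw [Fintype.card_equiv (Fintype.equivOfCardEq (by rw [ZMod.card, Fintype.card_fin])),
                ZMod.card]
      exact le_of_mul_le_mul_right (by linarith) hnfac
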